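/- arXiv:1210.7078 — 2 statements merged into one kernel-verified Lean document; each statement's English description precedes it below -/
import Mathlib

section
/- For fixed positive reals β_i (i in a finite index set) and p_i ∈ [1,∞], define for each finite set J containing a fixed index i: b_i(J) = β_i τ(J) / ( τ(J) + p_i^{-1} Σ_{l∈J} β_l^{-1} ), where τ(J) = 1 − Σ_{l∈J} (β_l p_l)^{-1}. If τ(I) > 0 for a finite index set I, then for every i ∈ I, b_i(I) = inf over all subsets J ⊆ I with i ∈ J of b_i(J); i.e., the infimum is attained at J = I. -/
theorem stmt_4 (I : Finset ℕ) (β q : ℕ → ℝ)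
    (hβ : ∀ l ∈ I, 0 < β l) (hq : ∀ l ∈ I, q l ∈ Set.Icc (0:ℝ) 1)
    (hτ : 0 < 1 - ∑ l ∈ I, q l / β l)
    (i : ℕ) (hi : i ∈ I) :
    β i * (1 - ∑ l ∈ I, q l / β l) /
        ((1 - ∑ l ∈ I, q l / β l) + q i * ∑ l ∈ I, (β l)⁻¹) =
      (I.powerset.filter fun J => i ∈ J).inf'
        ⟨I, by simp [hi]⟩
        (fun J => β i * (1 - ∑ l ∈ J, q l / β l) /
          ((1 - ∑ l ∈ J, q l / β l) + q i * ∑ l ∈ J, (β l)⁻¹)) := by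
  have hmem : I ∈ I.powerset.filter fun J => i ∈ J := by simp [hi]
  have hqi : 0 ≤ q i := (hq i hi).1
  have hβi : 0 < β i := hβ i hi
  have hSI0 : 0 ≤ ∑ l ∈ I, (β l)⁻¹ :=
    Finset.sum_nonneg fun l hl => (inv_pos.2 (hβ l hl)).le
  have hdI : 0 < (1 - ∑ l ∈ I, q l / β l) + q i * ∑ l ∈ I, (β l)⁻¹ :=
    add_pos_of_pos_of_nonneg hτ (mul_nonneg hqi hSI0)
  apply le_antisymm
  · apply Finset.le_inf'
    intro J hJ
    simp only [Finset.mem_filter, Finset.mem_powerset] at hJ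
    obtain ⟨hJI, _⟩ := hJ
    have hnonneg : ∀ l ∈ I, 0 ≤ q l / β l := fun l hl =>
      div_nonneg (hq l hl).1 (hβ l hl).le
    have hτJ : (1 - ∑ l ∈ I, q l / β l) ≤ 1 - ∑ l ∈ J, q l / β l := by
      have := Finset.sum_le_sum_of_subset_of_nonneg hJI
        (fun l hl _ => hnonneg l hl)
      linarith
    have hSJ : ∑ l ∈ J, (β l)⁻¹ ≤ ∑ l ∈ I, (β l)⁻¹ :=
      Finset.sum_le_sum_of_subset_of_nonneg hJI
        (fun l hl _ => (inv_pos.2 (hβ l hl)).le)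
    have hSJ0 : 0 ≤ ∑ l ∈ J, (β l)⁻¹ :=
      Finset.sum_nonneg fun l hl => (inv_pos.2 (hβ l (hJI hl))).le
    have hτJpos : 0 < 1 - ∑ l ∈ J, q l / β l := lt_of_lt_of_le hτ hτJ
    have hdJ : 0 < (1 - ∑ l ∈ J, q l / β l) + q i * ∑ l ∈ J, (β l)⁻¹ :=
      add_pos_of_pos_of_nonneg hτJpos (mul_nonneg hqi hSJ0)
    rw [div_le_div_iff₀ hdI hdJ]
    have key : (∑ l ∈ J, (β l)⁻¹) * (1 - ∑ l ∈ I, q l / β l) ≤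
        (∑ l ∈ I, (β l)⁻¹) * (1 - ∑ l ∈ J, q l / β l) :=
      mul_le_mul hSJ hτJ hτ.le hSI0
    nlinarith [mul_nonneg hqi (mul_nonneg hβi.le (sub_nonneg.2 key))]
  · exact Finset.inf'_le _ hmem
end

section
/- Let f₀ be a probability density and f_j = f₀ (1 + G_j/f₀) = f₀ + G_j be probability densities for j in a finite set J, where G_j are as in the disjoint-support construction (pairwise disjoint supports, zero integrals). For i.i.d. observations X_1,…,X_n ~ f₀, the expected squared deviation of the averaged likelihood ratio satisfies E_{f₀} [ (1/|J|) Σ_{j∈J} ∏_{k=1}^n f_j(X_k)/f₀(X_k) − 1 ]² = (1/|J|²) Σ_{j∈J} ( 1 + ∫ G_j²/f₀ )^n − 1/|J|. -/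
open MeasureTheory ENNReal NNReal

lemma pi_pow_integral {α : Type*} [MeasurableSpace α] (μ : Measure α) [SigmaFinite μ]
    (n : ℕ) (f : α → ℝ) :
    ∫ y : Fin n → α, ∏ k, f (y k) ∂Measure.pi (fun _ => μ) = (∫ x, f x ∂μ) ^ n := by
  letI : MeasureSpace α := ⟨μ⟩
  have := integral_fintype_prod_eq_pow (ι := Fin n) f (μ := μ)
  simpa using this

lemma pi_prod_integrable {α : Type*} [MeasurableSpace α] (μ : Measure α) [SigmaFinite μ]
    (n : ℕ) (f : α → ℝ) (hf : Integrable f μ) :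
    Integrable (fun y : Fin n → α => ∏ k, f (y k)) (Measure.pi fun _ => μ) := by
  letI : MeasureSpace α := ⟨μ⟩
  exact Integrable.fintype_prod (f := fun _ : Fin n => f) (fun _ => hf)

lemma wd_integral {α : Type*} [MeasurableSpace α] {μ : Measure α} (f : α → ℝ)
    (hfm : Measurable f) (hf0 : ∀ x, 0 ≤ f x) (g : α → ℝ) :
    ∫ x, g x ∂μ.withDensity (fun x => ENNReal.ofReal (f x)) = ∫ x, g x * f x ∂μ := by
  rw [show (fun x => ENNReal.ofReal (f x)) = (fun x => ((f x).toNNReal : ℝ≥0∞)) from rfl,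
    integral_withDensity_eq_integral_smul hfm.real_toNNReal g]
  congr 1; ext x
  simp [NNReal.smul_def, Real.coe_toNNReal _ (hf0 x), mul_comm]

lemma wd_integrable {α : Type*} [MeasurableSpace α] {μ : Measure α} (f : α → ℝ)
    (hfm : Measurable f) (hf0 : ∀ x, 0 ≤ f x) (g : α → ℝ) :
    Integrable g (μ.withDensity (fun x => ENNReal.ofReal (f x))) ↔
      Integrable (fun x => g x * f x) μ := by
  rw [show (fun x => ENNReal.ofReal (f x)) = (fun x => ((f x).toNNReal : ℝ≥0∞)) from rfl,
    integrable_withDensity_iff_integrable_smul hfm.real_toNNReal]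
  have : (fun x => (f x).toNNReal • g x) = fun x => g x * f x := by
    ext x; simp [NNReal.smul_def, Real.coe_toNNReal _ (hf0 x), mul_comm]
  rw [this]

theorem stmt_10 (m n : ℕ) (hn : 0 < n) {J : Type*} [Fintype J] [Nonempty J]
    (f₀ : (Fin m → ℝ) → ℝ)
    (hf₀m : Measurable f₀) (hf₀0 : ∀ x, 0 ≤ f₀ x)
    (hf₀i : Integrable f₀) (hf₀1 : ∫ x, f₀ x = 1)
    (G : J → (Fin m → ℝ) → ℝ)
    (hGm : ∀ j, Measurable (G j)) (hGi : ∀ j, Integrable (G j))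
    (hGpos : ∀ j x, 0 ≤ f₀ x + G j x)
    (hsupp : ∀ j x, f₀ x = 0 → G j x = 0)
    (hzero : ∀ j, ∫ x, G j x = 0)
    (hdisj : ∀ j j', j ≠ j' → ∀ x, G j x * G j' x = 0)
    (hG2 : ∀ j, Integrable fun x => (G j x) ^ 2 / f₀ x) :
    ∫ y : Fin n → (Fin m → ℝ),
        ((1 / (Fintype.card J : ℝ)) *
            ∑ j, ∏ k, (f₀ (y k) + G j (y k)) / f₀ (y k) - 1) ^ 2
        ∂(Measure.pi fun _ => volume.withDensity fun x => ENNReal.ofReal (f₀ x)) =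
      (1 / (Fintype.card J : ℝ) ^ 2) *
          ∑ j, (1 + ∫ x, (G j x) ^ 2 / f₀ x) ^ n -
        1 / (Fintype.card J : ℝ) := by
  set μ : Measure (Fin m → ℝ) := volume.withDensity fun x => ENNReal.ofReal (f₀ x) with hμdef
  set c : ℝ := (Fintype.card J : ℝ) with hc
  classical
  have hc0 : 0 < c := by
    rw [hc]; exact_mod_cast Fintype.card_pos
  haveI hμprob : IsProbabilityMeasure μ := by
    constructor
    rw [hμdef, withDensity_apply _ MeasurableSet.univ, setLIntegral_univ,
      ← ofReal_integral_eq_lintegral_ofReal hf₀i (ae_of_all _ hf₀0), hf₀1, ENNReal.ofReal_one]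
  -- pointwise identities
  have h1 : ∀ j x, (f₀ x + G j x) / f₀ x * f₀ x = f₀ x + G j x := by
    intro j x
    by_cases h : f₀ x = 0
    · simp [h, hsupp j x h]
    · field_simp
  have h2 : ∀ j x, (f₀ x + G j x) / f₀ x * ((f₀ x + G j x) / f₀ x) * f₀ x
      = f₀ x + 2 * G j x + (G j x) ^ 2 / f₀ x := by
    intro j x
    by_cases h : f₀ x = 0
    · simp [h, hsupp j x h]
    · field_simp; ring
  have h3 : ∀ j j', j ≠ j' → ∀ x, (f₀ x + G j x) / f₀ x * ((f₀ x + G j' x) / f₀ x) * f₀ x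
      = f₀ x + G j x + G j' x := by
    intro j j' hne x
    by_cases h : f₀ x = 0
    · simp [h, hsupp j x h, hsupp j' x h]
    · have hd := hdisj j j' hne x
      field_simp
      linear_combination hd
  -- integrability over μ of L j * L j'
  have hLL : ∀ j j', Integrable (fun x => (f₀ x + G j x) / f₀ x * ((f₀ x + G j' x) / f₀ x)) μ := by
    intro j j'
    rw [hμdef, wd_integrable f₀ hf₀m hf₀0]
    by_cases hne : j = j'
    · subst hne
      have : (fun x => (f₀ x + G j x) / f₀ x * ((f₀ x + G j x) / f₀ x) * f₀ x)
          = fun x => f₀ x + 2 * G j x + (G j x) ^ 2 / f₀ x := funext (h2 j)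
      rw [this]
      exact (hf₀i.add ((hGi j).const_mul 2)).add (hG2 j)
    · have : (fun x => (f₀ x + G j x) / f₀ x * ((f₀ x + G j' x) / f₀ x) * f₀ x)
          = fun x => f₀ x + G j x + G j' x := funext (h3 j j' hne)
      rw [this]
      exact (hf₀i.add (hGi j)).add (hGi j')
  have hL : ∀ j, Integrable (fun x => (f₀ x + G j x) / f₀ x) μ := by
    intro j
    rw [hμdef, wd_integrable f₀ hf₀m hf₀0]
    have : (fun x => (f₀ x + G j x) / f₀ x * f₀ x) = fun x => f₀ x + G j x := funext (h1 j)
    rw [this]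
    exact hf₀i.add (hGi j)
  -- integrals over μ
  have I1 : ∀ j, ∫ x, (f₀ x + G j x) / f₀ x ∂μ = 1 := by
    intro j
    rw [hμdef, wd_integral f₀ hf₀m hf₀0]
    have : (fun x => (f₀ x + G j x) / f₀ x * f₀ x) = fun x => f₀ x + G j x := funext (h1 j)
    rw [this, integral_add hf₀i (hGi j), hf₀1, hzero]
    norm_num
  have I2 : ∀ j j', ∫ x, (f₀ x + G j x) / f₀ x * ((f₀ x + G j' x) / f₀ x) ∂μ
      = if j = j' then 1 + ∫ x, (G j x) ^ 2 / f₀ x else 1 := by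
    intro j j'
    rw [hμdef, wd_integral f₀ hf₀m hf₀0]
    by_cases hne : j = j'
    · subst hne
      rw [if_pos rfl]
      have : (fun x => (f₀ x + G j x) / f₀ x * ((f₀ x + G j x) / f₀ x) * f₀ x)
          = fun x => f₀ x + 2 * G j x + (G j x) ^ 2 / f₀ x := funext (h2 j)
      have ia : Integrable (fun x => f₀ x + 2 * G j x) := hf₀i.add ((hGi j).const_mul 2)
      have ib : Integrable (fun x => 2 * G j x) := (hGi j).const_mul 2
      rw [this, integral_add ia (hG2 j), integral_add hf₀i ib, integral_const_mul, hf₀1, hzero]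
      ring
    · rw [if_neg hne]
      have : (fun x => (f₀ x + G j x) / f₀ x * ((f₀ x + G j' x) / f₀ x) * f₀ x)
          = fun x => f₀ x + G j x + G j' x := funext (h3 j j' hne)
      have ia : Integrable (fun x => f₀ x + G j x) := hf₀i.add (hGi j)
      rw [this, integral_add ia (hGi j'), integral_add hf₀i (hGi j), hf₀1, hzero, hzero]
      norm_num
  -- expand the square
  have hexp : ∀ y : Fin n → (Fin m → ℝ),
      ((1 / c) * ∑ j, ∏ k, (f₀ (y k) + G j (y k)) / f₀ (y k) - 1) ^ 2
        = (1 / c ^ 2) * ∑ j, ∑ j', ∏ k,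
            ((f₀ (y k) + G j (y k)) / f₀ (y k) * ((f₀ (y k) + G j' (y k)) / f₀ (y k)))
          - (2 / c) * ∑ j, ∏ k, (f₀ (y k) + G j (y k)) / f₀ (y k) + 1 := by
    intro y
    have hs : ∑ j, ∑ j', ∏ k,
        ((f₀ (y k) + G j (y k)) / f₀ (y k) * ((f₀ (y k) + G j' (y k)) / f₀ (y k)))
        = (∑ j, ∏ k, (f₀ (y k) + G j (y k)) / f₀ (y k))
          * (∑ j, ∏ k, (f₀ (y k) + G j (y k)) / f₀ (y k)) := by
      rw [Finset.sum_mul_sum]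
      simp_rw [Finset.prod_mul_distrib]
    rw [hs]; ring
  simp only [hexp]
  -- integrate term by term
  have intLL : ∀ j j' : J, Integrable (fun y : Fin n → (Fin m → ℝ) => ∏ k,
      ((f₀ (y k) + G j (y k)) / f₀ (y k) * ((f₀ (y k) + G j' (y k)) / f₀ (y k))))
      (Measure.pi fun _ => μ) := fun j j' =>
    pi_prod_integrable μ n _ (hLL j j')
  have intL : ∀ j : J, Integrable (fun y : Fin n → (Fin m → ℝ) => ∏ k,
      (f₀ (y k) + G j (y k)) / f₀ (y k)) (Measure.pi fun _ => μ) := fun j =>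
    pi_prod_integrable μ n _ (hL j)
  have intSum1 : Integrable (fun y : Fin n → (Fin m → ℝ) => (1 / c ^ 2) * ∑ j, ∑ j', ∏ k,
      ((f₀ (y k) + G j (y k)) / f₀ (y k) * ((f₀ (y k) + G j' (y k)) / f₀ (y k))))
      (Measure.pi fun _ => μ) := by
    apply Integrable.const_mul
    exact integrable_finset_sum _ fun j _ => integrable_finset_sum _ fun j' _ => intLL j j'
  have intSum2 : Integrable (fun y : Fin n → (Fin m → ℝ) => (2 / c) * ∑ j, ∏ k,
      (f₀ (y k) + G j (y k)) / f₀ (y k)) (Measure.pi fun _ => μ) := by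
    apply Integrable.const_mul
    exact integrable_finset_sum _ fun j _ => intL j
  have intSub : Integrable (fun y : Fin n → (Fin m → ℝ) =>
      (1 / c ^ 2) * (∑ j, ∑ j', ∏ k,
        ((f₀ (y k) + G j (y k)) / f₀ (y k) * ((f₀ (y k) + G j' (y k)) / f₀ (y k))))
      - (2 / c) * ∑ j, ∏ k, (f₀ (y k) + G j (y k)) / f₀ (y k)) (Measure.pi fun _ => μ) :=
    intSum1.sub intSum2
  rw [integral_add intSub (integrable_const 1),
    integral_sub intSum1 intSum2, integral_const_mul, integral_const_mul,
    integral_finset_sum _ (fun j _ => integrable_finset_sum _ fun j' _ => intLL j j'),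
    integral_finset_sum _ (fun j _ => intL j)]
  have hin : ∀ j : J, ∫ y : Fin n → (Fin m → ℝ), ∑ j', ∏ k,
      ((f₀ (y k) + G j (y k)) / f₀ (y k) * ((f₀ (y k) + G j' (y k)) / f₀ (y k)))
      ∂(Measure.pi fun _ => μ) = ∑ j', ∫ y : Fin n → (Fin m → ℝ), ∏ k,
      ((f₀ (y k) + G j (y k)) / f₀ (y k) * ((f₀ (y k) + G j' (y k)) / f₀ (y k)))
      ∂(Measure.pi fun _ => μ) :=
    fun j => integral_finset_sum _ (fun j' _ => intLL j j')
  have J1 : ∀ j : J, ∫ y : Fin n → (Fin m → ℝ), ∏ k,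
      (f₀ (y k) + G j (y k)) / f₀ (y k) ∂(Measure.pi fun _ => μ) = 1 := by
    intro j
    rw [pi_pow_integral μ n (fun x => (f₀ x + G j x) / f₀ x), I1 j, one_pow]
  have J2 : ∀ j j' : J, ∫ y : Fin n → (Fin m → ℝ), ∏ k,
      ((f₀ (y k) + G j (y k)) / f₀ (y k) * ((f₀ (y k) + G j' (y k)) / f₀ (y k)))
      ∂(Measure.pi fun _ => μ)
      = (if j = j' then 1 + ∫ x, (G j x) ^ 2 / f₀ x else 1) ^ n := by
    intro j j'
    rw [pi_pow_integral μ n (fun x => (f₀ x + G j x) / f₀ x * ((f₀ x + G j' x) / f₀ x)), I2 j j']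
  simp_rw [hin, J1, J2]
  have hone : ∫ (a : Fin n → Fin m → ℝ), (1:ℝ) ∂(Measure.pi fun _ => μ) = 1 := by
    simp
  rw [hone]
  have hdiag : ∀ j : J, ∑ j' : J,
      ((if j = j' then 1 + ∫ x, (G j x) ^ 2 / f₀ x else 1) : ℝ) ^ n
      = (1 + ∫ x, (G j x) ^ 2 / f₀ x) ^ n - 1 + c := by
    intro j
    have h : ∀ j' : J, ((if j = j' then 1 + ∫ x, (G j x) ^ 2 / f₀ x else 1) : ℝ) ^ n
        = (if j = j' then (1 + ∫ x, (G j x) ^ 2 / f₀ x) ^ n - 1 else 0) + 1 := by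
      intro j'; split <;> simp
    simp_rw [h, Finset.sum_add_distrib, Finset.sum_ite_eq, Finset.mem_univ, if_true,
      Finset.sum_const, Finset.card_univ, nsmul_eq_mul, mul_one, hc]
  simp_rw [hdiag, Finset.sum_add_distrib, Finset.sum_sub_distrib, Finset.sum_const,
    Finset.card_univ, nsmul_eq_mul, mul_one]
  have hcne : c ≠ 0 := ne_of_gt hc0
  rw [hc] at hcne ⊢
  field_simp
  ring
end
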